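/- Let U be a tied incomplete ranking on {1,…,n} with consistent set S_U and ranked item set B_U, and let j ∈ A_s be a ranked item. Define the relative rank of j under π ∈ S_U as ρ_π(j) = #{b ∈ B_U : π(b) ≤ π(j)}. Then ρ_π(j) is uniformly distributed over the φ_U(j) values {τ_U(j), τ_U(j)+1, …, τ_U(j)+φ_U(j)−1}: for each such r, #{π ∈ S_U : ρ_π(j) = r} = |S_U|/φ_U(j). -/

import Mathlib

/-- A tied incomplete ranking on `{1,…,n}`: a sequence `A 0, …, A (K-1)` of nonempty
pairwise disjoint subsets of `Fin n`; all items in `A s` are preferred to all items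
in `A t` for `s < t`. -/
structure TIR (n : ℕ) where
  K : ℕ
  A : Fin K → Finset (Fin n)
  nonempty : ∀ s, (A s).Nonempty
  disjoint : ∀ s t, s ≠ t → Disjoint (A s) (A t)

/-- The set of permutations consistent with a tied incomplete ranking `U`. -/
def TIR.consistent {n : ℕ} (U : TIR n) : Finset (Equiv.Perm (Fin n)) :=
  Finset.univ.filter (fun π => ∀ s t : Fin U.K, s < t →
    ∀ a ∈ U.A s, ∀ b ∈ U.A t, π a < π b)

/-- The set `B_U` of items ranked by `U`. -/
def TIR.ranked {n : ℕ} (U : TIR n) : Finset (Fin n) :=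
  Finset.univ.biUnion U.A

namespace TIRaux

variable {n : ℕ}

/-- The rank of `b` within `A s` under `π`. -/
def rk (U : TIR n) (s : Fin U.K) (π : Equiv.Perm (Fin n)) (b : Fin n) : ℕ :=
  ((U.A s).filter (fun c => π c ≤ π b)).card

lemma rk_lt_rk (U : TIR n) (s : Fin U.K) (π : Equiv.Perm (Fin n)) {a b : Fin n}
    (hb : b ∈ U.A s) (hlt : π a < π b) : rk U s π a < rk U s π b := by
  apply Finset.card_lt_card
  rw [Finset.ssubset_def]
  constructor
  · intro c hc
    simp only [Finset.mem_filter] at *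
    exact ⟨hc.1, hc.2.trans hlt.le⟩
  · intro hsub
    have hbmem : b ∈ (U.A s).filter (fun c => π c ≤ π b) := by
      simp [Finset.mem_filter, hb]
    have := hsub hbmem
    simp only [Finset.mem_filter] at this
    exact absurd this.2 (not_le.mpr hlt)

lemma rk_inj (U : TIR n) (s : Fin U.K) (π : Equiv.Perm (Fin n)) {a b : Fin n}
    (ha : a ∈ U.A s) (hb : b ∈ U.A s) (h : rk U s π a = rk U s π b) : a = b := by
  rcases lt_trichotomy (π a) (π b) with hlt | heq | hgt
  · exact absurd h (Nat.ne_of_lt (rk_lt_rk U s π hb hlt))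
  · exact π.injective heq
  · exact absurd h.symm (Nat.ne_of_lt (rk_lt_rk U s π ha hgt))

lemma rk_pos (U : TIR n) (s : Fin U.K) (π : Equiv.Perm (Fin n)) {b : Fin n}
    (hb : b ∈ U.A s) : 1 ≤ rk U s π b := by
  rw [Nat.one_le_iff_ne_zero, ← Nat.pos_iff_ne_zero, rk, Finset.card_pos]
  exact ⟨b, by simp [Finset.mem_filter, hb]⟩

lemma rk_le (U : TIR n) (s : Fin U.K) (π : Equiv.Perm (Fin n)) (b : Fin n) :
    rk U s π b ≤ (U.A s).card :=
  Finset.card_le_card (Finset.filter_subset _ _)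

lemma rk_surj (U : TIR n) (s : Fin U.K) (π : Equiv.Perm (Fin n)) {k : ℕ}
    (hk1 : 1 ≤ k) (hk2 : k ≤ (U.A s).card) : ∃ a ∈ U.A s, rk U s π a = k := by
  have himg : (U.A s).image (rk U s π) ⊆ Finset.Icc 1 (U.A s).card := by
    intro x hx
    simp only [Finset.mem_image] at hx
    obtain ⟨b, hb, rfl⟩ := hx
    exact Finset.mem_Icc.mpr ⟨rk_pos U s π hb, rk_le U s π b⟩
  have hcard : ((U.A s).image (rk U s π)).card = (U.A s).card :=
    Finset.card_image_of_injOn (fun a ha b hb h => rk_inj U s π ha hb h)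
  have himeq : (U.A s).image (rk U s π) = Finset.Icc 1 (U.A s).card :=
    Finset.eq_of_subset_of_card_le himg (by rw [hcard, Nat.card_Icc]; omega)
  have hkmem : k ∈ (U.A s).image (rk U s π) := by
    rw [himeq]; exact Finset.mem_Icc.mpr ⟨hk1, hk2⟩
  simpa using Finset.mem_image.mp hkmem

lemma swap_mem (U : TIR n) (s : Fin U.K) {j a : Fin n} (hj : j ∈ U.A s) (ha : a ∈ U.A s)
    {t : Fin U.K} {x : Fin n} (hx : x ∈ U.A t) : Equiv.swap j a x ∈ U.A t := by
  by_cases hts : t = s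
  · subst hts
    rcases eq_or_ne x j with rfl | hxj
    · rw [Equiv.swap_apply_left]; exact ha
    rcases eq_or_ne x a with rfl | hxa
    · rw [Equiv.swap_apply_right]; exact hj
    · rw [Equiv.swap_apply_of_ne_of_ne hxj hxa]; exact hx
  · have hxj : x ≠ j := fun h => Finset.disjoint_left.mp (U.disjoint t s hts) hx (h ▸ hj)
    have hxa : x ≠ a := fun h => Finset.disjoint_left.mp (U.disjoint t s hts) hx (h ▸ ha)
    rw [Equiv.swap_apply_of_ne_of_ne hxj hxa]; exact hx

lemma mem_consistent {U : TIR n} {π : Equiv.Perm (Fin n)} : π ∈ U.consistent ↔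
    ∀ s t : Fin U.K, s < t → ∀ a ∈ U.A s, ∀ b ∈ U.A t, π a < π b := by
  simp [TIR.consistent]

lemma consistent_mul_swap {U : TIR n} {s : Fin U.K} {j a : Fin n}
    (hj : j ∈ U.A s) (ha : a ∈ U.A s) {π : Equiv.Perm (Fin n)} (hπ : π ∈ U.consistent) :
    π * Equiv.swap j a ∈ U.consistent := by
  rw [mem_consistent] at *
  intro s' t' hst x hx y hy
  simpa using hπ s' t' hst _ (swap_mem U s hj ha hx) _ (swap_mem U s hj ha hy)

lemma rk_mul_swap (U : TIR n) (s : Fin U.K) {j a : Fin n}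
    (hj : j ∈ U.A s) (ha : a ∈ U.A s) (π : Equiv.Perm (Fin n)) (b : Fin n) :
    rk U s (π * Equiv.swap j a) b = rk U s π (Equiv.swap j a b) := by
  unfold rk
  apply Finset.card_bij' (i := fun c _ => Equiv.swap j a c) (j := fun c _ => Equiv.swap j a c)
  · intro c hc
    have hc' := Finset.mem_filter.mp hc
    simp only [Equiv.Perm.mul_apply] at hc'
    exact Finset.mem_filter.mpr ⟨swap_mem U s hj ha hc'.1, hc'.2⟩
  · intro c hc
    have hc' := Finset.mem_filter.mp hc
    refine Finset.mem_filter.mpr ⟨swap_mem U s hj ha hc'.1, ?_⟩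
    simp only [Equiv.Perm.mul_apply, Equiv.swap_apply_self]
    exact hc'.2
  · intro c _
    exact Equiv.swap_apply_self j a c
  · intro c _
    exact Equiv.swap_apply_self j a c

lemma rho_eq (U : TIR n) {s : Fin U.K} {j : Fin n} (hj : j ∈ U.A s)
    {π : Equiv.Perm (Fin n)} (hπ : π ∈ U.consistent) :
    (U.ranked.filter (fun b => π b ≤ π j)).card
      = (∑ t ∈ Finset.univ.filter (fun t : Fin U.K => t < s), (U.A t).card)
        + rk U s π j := by
  rw [mem_consistent] at hπ
  rw [TIR.ranked, Finset.filter_biUnion, Finset.card_biUnion]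
  · rw [← Finset.sum_filter_add_sum_filter_not Finset.univ (fun t => t < s)]
    congr 1
    · apply Finset.sum_congr rfl
      intro t ht
      have hts : t < s := (Finset.mem_filter.mp ht).2
      rw [Finset.filter_true_of_mem]
      intro b hb
      exact (hπ t s hts b hb j hj).le
    · rw [Finset.sum_eq_single_of_mem s (by simp)]
      · rfl
      intro t ht hts
      have hst : s < t := lt_of_le_of_ne (not_lt.mp (Finset.mem_filter.mp ht).2) (Ne.symm hts)
      rw [Finset.card_eq_zero, Finset.filter_eq_empty_iff]
      intro b hb
      exact not_le.mpr (hπ s t hst j hj b hb)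
  · intro t _ t' _ htt'
    exact Finset.disjoint_filter_filter (U.disjoint t t' htt')

/-- The element of `A s` with rank `k` under `π`. -/
noncomputable def pick (U : TIR n) (s : Fin U.K) (π : Equiv.Perm (Fin n)) (k : ℕ) : Fin n :=
  if h : ∃ a ∈ U.A s, rk U s π a = k then h.choose else (U.nonempty s).choose

lemma pick_spec (U : TIR n) (s : Fin U.K) (π : Equiv.Perm (Fin n)) {k : ℕ}
    (hk1 : 1 ≤ k) (hk2 : k ≤ (U.A s).card) :
    pick U s π k ∈ U.A s ∧ rk U s π (pick U s π k) = k := by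
  have h := rk_surj U s π hk1 hk2
  rw [pick, dif_pos h]
  exact ⟨h.choose_spec.1, h.choose_spec.2⟩

lemma step_mem (U : TIR n) {s : Fin U.K} {j : Fin n} (hj : j ∈ U.A s)
    {k₂ : ℕ} (h21 : 1 ≤ k₂) (h22 : k₂ ≤ (U.A s).card)
    {π : Equiv.Perm (Fin n)} (hπ : π ∈ U.consistent) :
    π * Equiv.swap j (pick U s π k₂) ∈ U.consistent ∧
      rk U s (π * Equiv.swap j (pick U s π k₂)) j = k₂ := by
  obtain ⟨hpm, hpr⟩ := pick_spec U s π h21 h22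
  refine ⟨consistent_mul_swap hj hpm hπ, ?_⟩
  rw [rk_mul_swap U s hj hpm, Equiv.swap_apply_left, hpr]

lemma step_step (U : TIR n) {s : Fin U.K} {j : Fin n} (hj : j ∈ U.A s)
    {k₁ k₂ : ℕ} (h11 : 1 ≤ k₁) (h12 : k₁ ≤ (U.A s).card)
    (h21 : 1 ≤ k₂) (h22 : k₂ ≤ (U.A s).card)
    {π : Equiv.Perm (Fin n)} (hπk : rk U s π j = k₁) :
    (π * Equiv.swap j (pick U s π k₂)) *
      Equiv.swap j (pick U s (π * Equiv.swap j (pick U s π k₂)) k₁) = π := by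
  obtain ⟨hpm, hpr⟩ := pick_spec U s π h21 h22
  set a := pick U s π k₂ with hadef
  set π' := π * Equiv.swap j a with hπ'def
  obtain ⟨hqm, hqr⟩ := pick_spec U s π' h11 h12
  have hrka : rk U s π' a = k₁ := by
    rw [hπ'def, rk_mul_swap U s hj hpm, Equiv.swap_apply_right, hπk]
  have hpeq : pick U s π' k₁ = a := rk_inj U s π' hqm hpm (hqr.trans hrka.symm)
  rw [hpeq, hπ'def, mul_assoc, Equiv.swap_mul_self, mul_one]

lemma fiber_card (U : TIR n) {s : Fin U.K} {j : Fin n} (hj : j ∈ U.A s)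
    {k₁ k₂ : ℕ} (h11 : 1 ≤ k₁) (h12 : k₁ ≤ (U.A s).card)
    (h21 : 1 ≤ k₂) (h22 : k₂ ≤ (U.A s).card) :
    (U.consistent.filter (fun π => rk U s π j = k₁)).card
      = (U.consistent.filter (fun π => rk U s π j = k₂)).card := by
  apply Finset.card_bij' (i := fun π _ => π * Equiv.swap j (pick U s π k₂))
    (j := fun π _ => π * Equiv.swap j (pick U s π k₁))
  · intro π hπ
    rw [Finset.mem_filter] at hπ ⊢
    exact step_mem U hj h21 h22 hπ.1
  · intro π hπ
    rw [Finset.mem_filter] at hπ ⊢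
    exact step_mem U hj h11 h12 hπ.1
  · intro π hπ
    rw [Finset.mem_filter] at hπ
    exact step_step U hj h11 h12 h21 h22 hπ.2
  · intro π hπ
    rw [Finset.mem_filter] at hπ
    exact step_step U hj h21 h22 h11 h12 hπ.2

end TIRaux

/-- If `j ∈ A s` is a ranked item with minimal relative rank `τ = 1 + Σ_{t<s}|A t|`
and `φ = |A s|`, then the relative rank `ρ_π(j) = #{b ∈ B_U : π b ≤ π j}` is uniformly
distributed over `{τ, τ+1, …, τ+φ−1}`: for each such `r` the number of consistent
permutations with `ρ_π(j) = r` is `|S_U|/φ`. -/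
theorem ranked_relative_rank_uniform (n : ℕ) (U : TIR n) (j : Fin n)
    (s : Fin U.K) (hj : j ∈ U.A s)
    (τ φ : ℕ)
    (hτ : τ = 1 + ∑ t ∈ Finset.univ.filter (fun t : Fin U.K => t < s), (U.A t).card)
    (hφ : φ = (U.A s).card)
    (r : ℕ) (hr1 : τ ≤ r) (hr2 : r ≤ τ + φ - 1) :
    ((U.consistent.filter
        (fun π => (U.ranked.filter (fun b => π b ≤ π j)).card = r)).card : ℚ)
      = (U.consistent.card : ℚ) / (φ : ℚ) := by
  have hφpos : 0 < φ := hφ ▸ Finset.card_pos.mpr (U.nonempty s)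
  set k := r - τ + 1 with hk
  have hk1 : 1 ≤ k := by omega
  have hk2 : k ≤ φ := by omega
  have hk2' : k ≤ (U.A s).card := by rw [← hφ]; exact hk2
  have hfeq : U.consistent.filter (fun π => (U.ranked.filter (fun b => π b ≤ π j)).card = r)
      = U.consistent.filter (fun π => TIRaux.rk U s π j = k) := by
    apply Finset.filter_congr
    intro π hπ
    rw [TIRaux.rho_eq U hj hπ]
    omega
  have hsum : U.consistent.card = ∑ k' ∈ Finset.Icc 1 φ,
      (U.consistent.filter (fun π => TIRaux.rk U s π j = k')).card := by
    apply Finset.card_eq_sum_card_fiberwise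
    intro π _
    rw [Finset.mem_coe, Finset.mem_Icc]
    exact ⟨TIRaux.rk_pos U s π hj, hφ ▸ TIRaux.rk_le U s π j⟩
  have hconst : ∀ k' ∈ Finset.Icc 1 φ,
      (U.consistent.filter (fun π => TIRaux.rk U s π j = k')).card
        = (U.consistent.filter (fun π => TIRaux.rk U s π j = k)).card := by
    intro k' hk'
    rw [Finset.mem_Icc] at hk'
    exact TIRaux.fiber_card U hj hk'.1 (by rw [← hφ]; exact hk'.2) hk1 hk2'
  have hmain : U.consistent.card
      = φ * (U.consistent.filter (fun π => TIRaux.rk U s π j = k)).card := by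
    rw [hsum, Finset.sum_congr rfl hconst, Finset.sum_const, Nat.card_Icc, smul_eq_mul]
    congr 1
  rw [hfeq, eq_div_iff (by exact_mod_cast hφpos.ne')]
  exact_mod_cast (Nat.mul_comm (U.consistent.filter (fun π => TIRaux.rk U s π j = k)).card
    φ).trans hmain.symm
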